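/- Let Q be a loopy Laplacian matrix (a Z-matrix with nonnegative row sums) of a directed weighted graph, and let α be a reachable subset (every interior node has a path to some boundary node). Then Q[αᶜ,αᶜ] is invertible, so the Kron-reduced matrix Q/Q[αᶜ,αᶜ] is well-defined. -/

import Mathlib

open Matrix Finset

/-- The submatrix of `A` with rows in `s` and columns in `t`. -/
noncomputable def subm {ι : Type*} [Fintype ι] [DecidableEq ι]
    (A : Matrix ι ι ℝ) (s t : Finset ι) : Matrix s t ℝ :=
  Matrix.of fun i j => A i j

/-- The Schur complement `A/A[αᶜ,αᶜ]`, i.e. the Kron reduction keeping the nodes of `α`. -/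
noncomputable def schur {ι : Type*} [Fintype ι] [DecidableEq ι]
    (A : Matrix ι ι ℝ) (α : Finset ι) : Matrix α α ℝ :=
  subm A α α - subm A α αᶜ * (subm A αᶜ αᶜ)⁻¹ * subm A αᶜ α

/-- The loopy Laplacian `Q = D - A + diag(Aᵢᵢ)` of the graph with adjacency matrix `A`. -/
noncomputable def loopyLap {n : ℕ} (A : Matrix (Fin n) (Fin n) ℝ) : Matrix (Fin n) (Fin n) ℝ :=
  Matrix.of fun i j => if i = j then ∑ k, A i k else -A i j

/-- The loop-less Laplacian `L = D - A` of the graph with adjacency matrix `A`. -/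
noncomputable def looplessLap {n : ℕ} (A : Matrix (Fin n) (Fin n) ℝ) : Matrix (Fin n) (Fin n) ℝ :=
  Matrix.of fun i j => if i = j then (∑ k, A i k) - A i i else -A i j

/-- `α` is a reachable subset: every interior node has a directed path to some boundary node. -/
def ReachableSubset {n : ℕ} (A : Matrix (Fin n) (Fin n) ℝ) (α : Finset (Fin n)) : Prop :=
  ∀ i ∉ α, ∃ j ∈ α, Relation.ReflTransGen (fun u v => 0 < A u v) i j

/-- If `α` is a reachable subset of the directed weighted graph with adjacency matrix `A`,
then the submatrix `Q[αᶜ,αᶜ]` of the loopy Laplacian is invertible, so the Kron reduction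
`Q/Q[αᶜ,αᶜ]` is well-defined. -/
theorem kron_reduction_well_defined {n : ℕ} (A : Matrix (Fin n) (Fin n) ℝ)
    (hA : ∀ i j, 0 ≤ A i j) (α : Finset (Fin n)) (hreach : ReachableSubset A α) :
    IsUnit (subm (loopyLap A) αᶜ αᶜ).det := by
  rw [isUnit_iff_ne_zero]
  intro hdet
  obtain ⟨v, hv0, hvM⟩ := Matrix.exists_mulVec_eq_zero_iff.mpr hdet
  have hne : Nonempty ↥(αᶜ : Finset (Fin n)) := by
    by_contra h
    exact hv0 (funext fun i => absurd ⟨i⟩ h)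
  obtain ⟨i₀, hi₀⟩ := Finite.exists_max fun j : ↥(αᶜ : Finset (Fin n)) => |v j|
  set m := |v i₀| with hm
  have hm0 : 0 < m := by
    rcases (abs_nonneg (v i₀)).lt_or_eq with h | h
    · exact h
    · exfalso; apply hv0; funext j
      have h2 : v j = 0 :=
        abs_eq_zero.mp (le_antisymm ((hi₀ j).trans_eq (hm.trans h.symm)) (abs_nonneg _))
      simpa using h2
  set w : ↥(αᶜ : Finset (Fin n)) → ℝ := if 0 ≤ v i₀ then v else -v with hw
  have hwM : (subm (loopyLap A) αᶜ αᶜ).mulVec w = 0 := by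
    rw [hw]; split
    · exact hvM
    · rw [Matrix.mulVec_neg, hvM, neg_zero]
  have hwle : ∀ j, w j ≤ m := by
    intro j
    have h1 : |w j| = |v j| := by rw [hw]; split <;> simp
    calc w j ≤ |w j| := le_abs_self _
      _ = |v j| := h1
      _ ≤ m := hi₀ j
  have hwi₀ : w i₀ = m := by
    rw [hw, hm]; split
    · rw [abs_of_nonneg (by assumption)]
    · rw [abs_of_neg (lt_of_not_ge (by assumption))]; simp
  -- key step: value m propagates along positive edges and forbids edges into α
  have key : ∀ (u : Fin n) (hu : u ∈ αᶜ), w ⟨u, hu⟩ = m →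
      ∀ j, 0 < A u j → ∃ hj : j ∈ αᶜ, w ⟨j, hj⟩ = m := by
    intro u hu hwu
    set u' : ↥(αᶜ : Finset (Fin n)) := ⟨u, hu⟩ with hu'
    set E := (Finset.univ : Finset ↥(αᶜ : Finset (Fin n))).erase u' with hE
    have hrow : ∑ j : ↥(αᶜ : Finset (Fin n)), subm (loopyLap A) αᶜ αᶜ u' j * w j = 0 := by
      have := congrFun hwM u'
      simpa [Matrix.mulVec, dotProduct] using this
    -- rewrite the row sum
    have hterm : ∀ j ∈ E, subm (loopyLap A) αᶜ αᶜ u' j * w j = -(A u (j : Fin n) * w j) := by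
      intro j hj
      have hne' : u ≠ (j : Fin n) := by
        intro h
        exact (Finset.ne_of_mem_erase hj) (Subtype.ext h.symm)
      simp [subm, loopyLap, hne', neg_mul]
      exact if_neg (fun h => hne' (congrArg Subtype.val h))
    have hdiag : subm (loopyLap A) αᶜ αᶜ u' u' * w u' = (∑ k, A u k) * m := by
      simp [subm, loopyLap, hwu]
      left; rfl
    have hrow' : (∑ k, A u k) * m = ∑ j ∈ E, A u (j : Fin n) * w j := by
      have := Finset.sum_erase_add Finset.univ
        (fun j => subm (loopyLap A) αᶜ αᶜ u' j * w j) (Finset.mem_univ u')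
      beta_reduce at this
      rw [Finset.sum_congr rfl hterm] at this
      rw [hdiag] at this
      rw [hrow] at this
      rw [Finset.sum_neg_distrib] at this
      linarith
    have hdec : ∑ k, A u k = A u u + (∑ j ∈ E, A u (j : Fin n)) + ∑ k ∈ α, A u k := by
      have h1 : ∑ k ∈ α, A u k + ∑ k ∈ αᶜ, A u k = ∑ k, A u k :=
        Finset.sum_add_sum_compl α (A u)
      have h2 : ∑ j : ↥(αᶜ : Finset (Fin n)), A u (j : Fin n) = ∑ k ∈ αᶜ, A u k :=
        Finset.sum_coe_sort αᶜ (A u)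
      have h3 : ∑ j ∈ E, A u (j : Fin n) + A u u = ∑ j : ↥(αᶜ : Finset (Fin n)), A u (j : Fin n) :=
        Finset.sum_erase_add Finset.univ _ (Finset.mem_univ u')
      linarith
    have h2 : ∑ j ∈ E, A u (j : Fin n) * (m - w j) =
        (∑ j ∈ E, A u (j : Fin n)) * m - ∑ j ∈ E, A u (j : Fin n) * w j := by
      rw [Finset.sum_mul, ← Finset.sum_sub_distrib]
      exact Finset.sum_congr rfl fun j _ => by ring
    have hrow'' : (A u u + (∑ j ∈ E, A u (j : Fin n)) + ∑ k ∈ α, A u k) * m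
        = ∑ j ∈ E, A u (j : Fin n) * w j := by rw [← hdec]; exact hrow'
    have heq : A u u * m + (∑ k ∈ α, A u k) * m + ∑ j ∈ E, A u (j : Fin n) * (m - w j) = 0 := by
      linear_combination h2 + hrow''
    have hpos1 : 0 ≤ A u u * m := mul_nonneg (hA u u) hm0.le
    have hpos2 : 0 ≤ (∑ k ∈ α, A u k) * m :=
      mul_nonneg (Finset.sum_nonneg fun k _ => hA u k) hm0.le
    have hposE : ∀ j ∈ E, 0 ≤ A u (j : Fin n) * (m - w j) :=
      fun j _ => mul_nonneg (hA u _) (sub_nonneg.mpr (hwle j))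
    have hpos3 : 0 ≤ ∑ j ∈ E, A u (j : Fin n) * (m - w j) := Finset.sum_nonneg hposE
    have z1 : A u u = 0 := by
      have : A u u * m = 0 := by linarith
      rcases mul_eq_zero.mp this with h | h
      · exact h
      · exact absurd h hm0.ne'
    have z2 : ∀ k ∈ α, A u k = 0 := by
      have hs : (∑ k ∈ α, A u k) * m = 0 := by linarith
      have : ∑ k ∈ α, A u k = 0 := by
        rcases mul_eq_zero.mp hs with h | h
        · exact h
        · exact absurd h hm0.ne'
      exact (Finset.sum_eq_zero_iff_of_nonneg fun k _ => hA u k).mp this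
    have z3 : ∀ j ∈ E, A u (j : Fin n) * (m - w j) = 0 := by
      have : ∑ j ∈ E, A u (j : Fin n) * (m - w j) = 0 := by linarith
      exact (Finset.sum_eq_zero_iff_of_nonneg hposE).mp this
    intro j hAj
    by_cases hjα : j ∈ α
    · exact absurd (z2 j hjα) hAj.ne'
    · have hj : j ∈ αᶜ := Finset.mem_compl.mpr hjα
      refine ⟨hj, ?_⟩
      by_cases hju : j = u
      · rw [hju] at hAj; exact absurd z1 hAj.ne'
      · have hjE : (⟨j, hj⟩ : ↥(αᶜ : Finset (Fin n))) ∈ E :=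
          Finset.mem_erase.mpr ⟨fun h => hju (congrArg Subtype.val h), Finset.mem_univ _⟩
        have := z3 _ hjE
        rcases mul_eq_zero.mp this with h | h
        · exact absurd h hAj.ne'
        · linarith [sub_eq_zero.mp h]
  -- propagate along any path starting at a max node
  have prop : ∀ {i j : Fin n}, Relation.ReflTransGen (fun a b => 0 < A a b) i j →
      ∀ hi : i ∈ αᶜ, w ⟨i, hi⟩ = m → j ∈ αᶜ := by
    intro i j hpath
    induction hpath using Relation.ReflTransGen.head_induction_on with
    | refl => exact fun hi _ => hi
    | head h' _ ih =>
      intro hi hwi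
      obtain ⟨hc, hwc⟩ := key _ hi hwi _ h'
      exact ih hc hwc
  obtain ⟨j, hjα, hpath⟩ := hreach i₀ (Finset.mem_compl.mp i₀.2)
  exact absurd hjα (Finset.mem_compl.mp (prop hpath i₀.2 hwi₀))
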